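/- Consider the Hermitian form q(z) = −z₀·conj(z_n) + z·conj(z) − z_n·conj(z₀) of signature (1,n) on ℂ^{n+1} = ℂ × ℂ^{n−1} × ℂ, and the Heisenberg translation T_Z of complex hyperbolic space ℍⁿ_ℂ induced by the matrix with rows (1, z*, z₀), (0, I, z), (0, 0, 1) for Z = [z₀ : z : 1] ∈ ∂∞ℍⁿ_ℂ ∖ {∞}. Then for any point W = [w₀ : w : 1] on the horosphere q = −2, one has d(W, T_Z W) = arcosh(|z·conj(w) − conj(z)·w − z₀ − 2|/2), and this quantity is independent of W if and only if z = 0 (i.e. T_Z is a vertical Heisenberg translation); moreover if z ≠ 0 it is unbounded as W ranges over the horosphere. -/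

import Mathlib

noncomputable section

/-- Inverse hyperbolic cosine. -/
def arcosh (x : ℝ) : ℝ := Real.log (x + Real.sqrt (x ^ 2 - 1))

/-- The Hermitian form of signature `(1,n)` on `ℂ^{n+1} = ℂ × ℂ^{n-1} × ℂ`:
`⟨z,w⟩ = -z₀ conj(wₙ) + z·conj(w) - zₙ conj(w₀)`. -/
def herm {m : ℕ} (x y : ℂ × EuclideanSpace ℂ (Fin m) × ℂ) : ℂ :=
  -x.1 * (starRingEnd ℂ) y.2.2 + (inner ℂ y.2.1 x.2.1 : ℂ) - x.2.2 * (starRingEnd ℂ) y.1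

/-- The distance in the projective model of complex hyperbolic space:
`d(X,Y) = arcosh √(⟨x,y⟩⟨y,x⟩ / (q(x) q(y)))` for lifts `x, y`. -/
def chDist {m : ℕ} (x y : ℂ × EuclideanSpace ℂ (Fin m) × ℂ) : ℝ :=
  arcosh (Real.sqrt (Complex.normSq (herm x y) / ((herm x x).re * (herm y y).re)))

/-- The Heisenberg translation `T_Z` of `ℍⁿ_ℂ` associated to
`Z = [z₀ : z : 1] ∈ ∂∞ℍⁿ_ℂ ∖ {∞}`, acting on lifts with last coordinate preserved:
`(w₀, w, wₙ) ↦ (w₀ + z*·w + z₀ wₙ, w + wₙ z, wₙ)`. -/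
def TZ {m : ℕ} (z₀ : ℂ) (z : EuclideanSpace ℂ (Fin m))
    (W : ℂ × EuclideanSpace ℂ (Fin m) × ℂ) : ℂ × EuclideanSpace ℂ (Fin m) × ℂ :=
  (W.1 + (inner ℂ z W.2.1 : ℂ) + z₀ * W.2.2, W.2.1 + W.2.2 • z, W.2.2)

/-! ### Auxiliary lemmas -/

lemma arcosh_lt_arcosh {a b : ℝ} (ha : 1 ≤ a) (hab : a < b) : arcosh a < arcosh b := by
  have ha0 : 0 < a := lt_of_lt_of_le zero_lt_one ha
  have h1 : (0:ℝ) < a + Real.sqrt (a ^ 2 - 1) := by positivity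
  apply Real.log_lt_log h1
  have : Real.sqrt (a ^ 2 - 1) ≤ Real.sqrt (b ^ 2 - 1) := by
    apply Real.sqrt_le_sqrt; nlinarith
  linarith

lemma log_le_arcosh {x : ℝ} (hx : 0 < x) : Real.log x ≤ arcosh x := by
  unfold arcosh
  apply Real.log_le_log hx
  nlinarith [Real.sqrt_nonneg (x ^ 2 - 1)]

/-- The main computation: the displacement of a horospherical point under `T_Z`. -/
lemma key {m : ℕ} (z₀ : ℂ) (z : EuclideanSpace ℂ (Fin m))
    (hZ : herm ((z₀, z, 1) : ℂ × EuclideanSpace ℂ (Fin m) × ℂ) (z₀, z, 1) = 0)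
    (w₀ : ℂ) (w : EuclideanSpace ℂ (Fin m))
    (hW : herm ((w₀, w, 1) : ℂ × EuclideanSpace ℂ (Fin m) × ℂ) (w₀, w, 1) = -2) :
    chDist (w₀, w, 1) (TZ z₀ z (w₀, w, 1))
      = arcosh (‖(starRingEnd ℂ) (inner ℂ z w : ℂ) - (inner ℂ z w : ℂ) - z₀ - 2‖ / 2) := by
  simp only [herm, map_one, mul_one] at hZ hW
  have hxy : herm ((w₀, w, 1) : ℂ × EuclideanSpace ℂ (Fin m) × ℂ) (TZ z₀ z (w₀, w, 1))
      = (starRingEnd ℂ) ((starRingEnd ℂ) (inner ℂ z w : ℂ) - (inner ℂ z w : ℂ) - z₀ - 2) := by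
    simp only [herm, TZ, inner_add_left, one_smul, map_add, map_mul, map_one, mul_one, map_sub,
      Complex.conj_conj, map_ofNat]
    linear_combination hW
  have hyy : herm (TZ z₀ z ((w₀, w, 1) : ℂ × EuclideanSpace ℂ (Fin m) × ℂ))
      (TZ z₀ z (w₀, w, 1)) = -2 := by
    simp only [herm, TZ, inner_add_left, inner_add_right, one_smul, map_add, map_mul, map_one,
      mul_one]
    linear_combination hW + hZ - (inner_conj_symm (𝕜 := ℂ) w z)
  have hxx : herm ((w₀, w, 1) : ℂ × EuclideanSpace ℂ (Fin m) × ℂ) (w₀, w, 1) = -2 := by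
    simp only [herm, map_one, mul_one]; linear_combination hW
  unfold chDist
  rw [hxy, hxx, hyy]
  congr 1
  rw [show ((-2 : ℂ)).re * ((-2 : ℂ)).re = 4 by norm_num]
  rw [Complex.normSq_conj, ← Complex.sq_norm]
  rw [show (‖(starRingEnd ℂ) (inner ℂ z w : ℂ) - (inner ℂ z w : ℂ) - z₀ - 2‖) ^ 2 / 4
      = (‖(starRingEnd ℂ) (inner ℂ z w : ℂ) - (inner ℂ z w : ℂ) - z₀ - 2‖ / 2) ^ 2 by
    ring]
  exact Real.sqrt_sq (by positivity)

lemma inner_self_c {m : ℕ} (z : EuclideanSpace ℂ (Fin m)) :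
    (inner ℂ z z : ℂ) = ((‖z‖^2 : ℝ) : ℂ) := by
  rw [inner_self_eq_norm_sq_to_K]; norm_num

lemma famInner {m : ℕ} (z : EuclideanSpace ℂ (Fin m)) (t : ℝ) :
    (inner ℂ z ((Complex.I * (t:ℂ)) • z) : ℂ) = Complex.I * (t:ℂ) * ((‖z‖^2 : ℝ) : ℂ) := by
  rw [inner_smul_right, inner_self_c]

/-- The points `(w₀(t), w(t), 1)` with `w(t) = (it)•z` lie on the horosphere `q = -2`. -/
lemma famHoro {m : ℕ} (z : EuclideanSpace ℂ (Fin m)) (t : ℝ) :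
    herm (((((t^2*‖z‖^2+2)/2 : ℝ) : ℂ), (Complex.I * (t:ℂ)) • z, 1) :
        ℂ × EuclideanSpace ℂ (Fin m) × ℂ)
      ((((t^2*‖z‖^2+2)/2 : ℝ) : ℂ), (Complex.I * (t:ℂ)) • z, 1) = -2 := by
  simp only [herm, map_one, mul_one, inner_smul_left, inner_smul_right, inner_self_c,
    map_mul, Complex.conj_I, Complex.conj_ofReal]
  push_cast
  linear_combination (-(t:ℂ)^2*((‖z‖:ℝ):ℂ)^2) * Complex.I_sq

/-- The squared modulus of the displacement quantity along the family `w(t) = (it)•z`. -/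
lemma famAbs {m : ℕ} (z₀ : ℂ) (z : EuclideanSpace ℂ (Fin m)) (t : ℝ)
    (hre : z₀.re = ‖z‖^2/2) :
    ‖(starRingEnd ℂ) (inner ℂ z ((Complex.I * (t:ℂ)) • z) : ℂ)
        - (inner ℂ z ((Complex.I * (t:ℂ)) • z) : ℂ) - z₀ - 2‖ ^ 2
      = (‖z‖^2/2 + 2)^2 + (2*t*‖z‖^2 + z₀.im)^2 := by
  rw [famInner, Complex.sq_norm, Complex.normSq_apply]
  set a : ℝ := ‖z‖^2 with ha
  simp [Complex.conj_ofReal]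
  rw [hre]
  ring

/-- Proposition 6.4 (`prop:heisenberg`), computational form: for the Heisenberg translation
`T_Z` with `Z = [z₀ : z : 1]` on the null cone (`q(Z) = 0`), and any point `W = [w₀ : w : 1]`
on the horosphere `q = -2`, one has
`d(W, T_Z W) = arcosh (|z·conj(w) - conj(z)·w - z₀ - 2| / 2)`; this displacement is
independent of `W` on the horosphere if and only if `z = 0` (`T_Z` is vertical), and if
`z ≠ 0` it is unbounded on the horosphere. -/
theorem heisenberg_translation_displacement
    (n : ℕ) (hn : 2 ≤ n) (z₀ : ℂ) (z : EuclideanSpace ℂ (Fin (n - 1)))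
    (hZ : herm ((z₀, z, 1) : ℂ × EuclideanSpace ℂ (Fin (n - 1)) × ℂ) (z₀, z, 1) = 0) :
    (∀ (w₀ : ℂ) (w : EuclideanSpace ℂ (Fin (n - 1))),
        herm ((w₀, w, 1) : ℂ × EuclideanSpace ℂ (Fin (n - 1)) × ℂ) (w₀, w, 1) = -2 →
        chDist (w₀, w, 1) (TZ z₀ z (w₀, w, 1))
          = arcosh (‖(starRingEnd ℂ) (inner ℂ z w : ℂ) - (inner ℂ z w : ℂ) - z₀ - 2‖ / 2)) ∧
    ((∀ (w₀ w₀' : ℂ) (w w' : EuclideanSpace ℂ (Fin (n - 1))),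
        herm ((w₀, w, 1) : ℂ × EuclideanSpace ℂ (Fin (n - 1)) × ℂ) (w₀, w, 1) = -2 →
        herm ((w₀', w', 1) : ℂ × EuclideanSpace ℂ (Fin (n - 1)) × ℂ) (w₀', w', 1) = -2 →
        chDist (w₀, w, 1) (TZ z₀ z (w₀, w, 1))
          = chDist (w₀', w', 1) (TZ z₀ z (w₀', w', 1))) ↔ z = 0) ∧
    (z ≠ 0 → ∀ M : ℝ, ∃ (w₀ : ℂ) (w : EuclideanSpace ℂ (Fin (n - 1))),
        herm ((w₀, w, 1) : ℂ × EuclideanSpace ℂ (Fin (n - 1)) × ℂ) (w₀, w, 1) = -2 ∧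
        M < chDist (w₀, w, 1) (TZ z₀ z (w₀, w, 1))) := by
  have hre : z₀.re = ‖z‖^2/2 := by
    have h := congrArg Complex.re hZ
    simp only [herm, map_one, mul_one, inner_self_c, Complex.add_re, Complex.sub_re,
      Complex.neg_re, Complex.mul_re, Complex.one_re, Complex.one_im, Complex.conj_re,
      Complex.conj_im, Complex.ofReal_re, Complex.zero_re, Complex.ofReal_im] at h
    linarith
  refine ⟨fun w₀ w hW => key z₀ z hZ w₀ w hW, ?_, ?_⟩
  · constructor
    · intro h
      by_contra hz
      have hα : 0 < ‖z‖^2 := by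
        have := norm_pos_iff.mpr hz
        positivity
      set t₁ : ℝ := -z₀.im/(2*‖z‖^2) with ht₁
      set t₂ : ℝ := t₁ + 1 with ht₂
      have h₁0 : 2*t₁*‖z‖^2 + z₀.im = 0 := by
        rw [ht₁]; field_simp; ring
      have h₂0 : 2*t₂*‖z‖^2 + z₀.im = 2*‖z‖^2 := by
        rw [ht₂, ht₁]; field_simp; ring
      have e1 := h ((((t₁^2*‖z‖^2+2)/2 : ℝ) : ℂ)) ((((t₂^2*‖z‖^2+2)/2 : ℝ) : ℂ))
        ((Complex.I * (t₁:ℂ)) • z) ((Complex.I * (t₂:ℂ)) • z)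
        (famHoro z t₁) (famHoro z t₂)
      rw [key z₀ z hZ _ _ (famHoro z t₁), key z₀ z hZ _ _ (famHoro z t₂)] at e1
      have hA₁ := famAbs z₀ z t₁ hre
      have hA₂ := famAbs z₀ z t₂ hre
      rw [h₁0] at hA₁
      rw [h₂0] at hA₂
      set A₁ := ‖(starRingEnd ℂ) (inner ℂ z ((Complex.I * (t₁:ℂ)) • z) : ℂ)
        - (inner ℂ z ((Complex.I * (t₁:ℂ)) • z) : ℂ) - z₀ - 2‖ with hA1def
      set A₂ := ‖(starRingEnd ℂ) (inner ℂ z ((Complex.I * (t₂:ℂ)) • z) : ℂ)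
        - (inner ℂ z ((Complex.I * (t₂:ℂ)) • z) : ℂ) - z₀ - 2‖ with hA2def
      have hA₁n : 0 ≤ A₁ := norm_nonneg _
      have hA₂n : 0 ≤ A₂ := norm_nonneg _
      have h2A₁ : 2 ≤ A₁ := by nlinarith
      have hlt : A₁ < A₂ := by nlinarith
      exact absurd e1 (ne_of_lt (arcosh_lt_arcosh (by linarith) (by linarith)))
    · intro hz
      subst hz
      intro w₀ w₀' w w' h1 h2
      rw [key z₀ 0 hZ _ _ h1, key z₀ 0 hZ _ _ h2]
      simp
  · intro hz M
    have hα : 0 < ‖z‖^2 := by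
      have := norm_pos_iff.mpr hz
      positivity
    set t : ℝ := (2*Real.exp M + 2 - z₀.im)/(2*‖z‖^2) with ht
    have h0 : 2*t*‖z‖^2 + z₀.im = 2*Real.exp M + 2 := by
      rw [ht]; field_simp; ring
    refine ⟨(((t^2*‖z‖^2+2)/2 : ℝ) : ℂ), (Complex.I * (t:ℂ)) • z, famHoro z t, ?_⟩
    rw [key z₀ z hZ _ _ (famHoro z t)]
    have hA := famAbs z₀ z t hre
    rw [h0] at hA
    set A := ‖(starRingEnd ℂ) (inner ℂ z ((Complex.I * (t:ℂ)) • z) : ℂ)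
      - (inner ℂ z ((Complex.I * (t:ℂ)) • z) : ℂ) - z₀ - 2‖ with hAdef
    have hAn : 0 ≤ A := norm_nonneg _
    have hE := Real.exp_pos M
    have h2 : Real.exp M < A/2 := by nlinarith
    calc M = Real.log (Real.exp M) := (Real.log_exp M).symm
      _ < Real.log (A/2) := Real.log_lt_log hE h2
      _ ≤ arcosh (A/2) := log_le_arcosh (by linarith)
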